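/- Second-order vanishing estimate for a C² error function: Let δ > 0, M ≥ 0, and let E : [−δ,δ]³ → ℝ be a C² function of the variables (σ, d, τ) whose mixed second partial derivatives ∂²E/∂σ∂τ and ∂²E/∂d∂τ are bounded in absolute value by M on [−δ,δ]³. Assume E(σ, d, 0) = 0 for all (σ,d) ∈ [−δ,δ]² and ∂E/∂τ(0, 0, τ) = 0 for all τ ∈ [−δ,δ]. Then |E(σ, d, τ)| ≤ 2M |τ| (|σ| + |d|) for all (σ, d, τ) ∈ [−δ,δ]³. -/

import Mathlib

open MeasureTheory Metric Set Filter
open scoped ENNReal NNReal Topology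

noncomputable section

/-- Mean-value-theorem bound: if `f` is continuous on the interval between `0` and `x`,
differentiable in its interior with derivative bounded by `C`, then
`|f x - f 0| ≤ C * |x|`. -/
private lemma mvt_abs_aux {f : ℝ → ℝ} {x C : ℝ}
    (hcont : ContinuousOn f (Icc (min 0 x) (max 0 x)))
    (hdiff : ∀ t ∈ Ioo (min 0 x) (max 0 x), HasDerivAt f (deriv f t) t)
    (hbound : ∀ t ∈ Ioo (min 0 x) (max 0 x), |deriv f t| ≤ C) :
    |f x - f 0| ≤ C * |x| := by
  rcases lt_trichotomy x 0 with hx | rfl | hx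
  · have hmin : min 0 x = x := min_eq_right hx.le
    have hmax : max 0 x = 0 := max_eq_left hx.le
    obtain ⟨c, hc, hc'⟩ := exists_hasDerivAt_eq_slope f (deriv f) hx
      (by rwa [hmin, hmax] at hcont)
      (fun t ht => hdiff t (by rw [hmin, hmax]; exact ht))
    have hxne : (0:ℝ) - x ≠ 0 := by intro h; exact absurd (by linarith : x = 0) (ne_of_lt hx)
    have hfx : f x - f 0 = deriv f c * x := by
      rw [eq_div_iff hxne] at hc'
      linear_combination hc'
    rw [hfx, abs_mul]
    exact mul_le_mul_of_nonneg_right (hbound c (by rw [hmin, hmax]; exact hc)) (abs_nonneg x)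
  · simp
  · have hmin : min 0 x = 0 := min_eq_left hx.le
    have hmax : max 0 x = x := max_eq_right hx.le
    obtain ⟨c, hc, hc'⟩ := exists_hasDerivAt_eq_slope f (deriv f) hx
      (by rwa [hmin, hmax] at hcont)
      (fun t ht => hdiff t (by rw [hmin, hmax]; exact ht))
    have hxne : x - 0 ≠ 0 := by intro h; exact absurd (by linarith : x = 0) (ne_of_gt hx)
    have hfx : f x - f 0 = deriv f c * x := by
      rw [eq_div_iff hxne] at hc'
      linear_combination -hc'
    rw [hfx, abs_mul]
    exact mul_le_mul_of_nonneg_right (hbound c (by rw [hmin, hmax]; exact hc)) (abs_nonneg x)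

/-- Second-order vanishing estimate for a C² error function:
if E(σ,d,0) = 0, ∂_τ E(0,0,τ) = 0 and the mixed second partials ∂²E/∂σ∂τ, ∂²E/∂d∂τ
are bounded by M on the cube [−δ,δ]³, then |E(σ,d,τ)| ≤ 2M|τ|(|σ|+|d|). -/
theorem second_order_vanishing_estimate
    (δ M : ℝ) (hδ : 0 < δ) (hM : 0 ≤ M)
    (E : ℝ → ℝ → ℝ → ℝ)
    (hE : ContDiffOn ℝ 2 (fun p : ℝ × ℝ × ℝ => E p.1 p.2.1 p.2.2)
      (Icc (-δ) δ ×ˢ Icc (-δ) δ ×ˢ Icc (-δ) δ))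
    (hmix₁ : ∀ σ ∈ Icc (-δ) δ, ∀ d ∈ Icc (-δ) δ, ∀ τ ∈ Icc (-δ) δ,
      |deriv (fun σ' => deriv (fun τ' => E σ' d τ') τ) σ| ≤ M)
    (hmix₂ : ∀ σ ∈ Icc (-δ) δ, ∀ d ∈ Icc (-δ) δ, ∀ τ ∈ Icc (-δ) δ,
      |deriv (fun d' => deriv (fun τ' => E σ d' τ') τ) d| ≤ M)
    (hzero : ∀ σ ∈ Icc (-δ) δ, ∀ d ∈ Icc (-δ) δ, E σ d 0 = 0)
    (hzero' : ∀ τ ∈ Icc (-δ) δ, deriv (fun τ' => E 0 0 τ') τ = 0) :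
    ∀ σ ∈ Icc (-δ) δ, ∀ d ∈ Icc (-δ) δ, ∀ τ ∈ Icc (-δ) δ,
      |E σ d τ| ≤ 2 * M * |τ| * (|σ| + |d|) := by
  intro σ hσ d hd τ hτ
  set S : Set (ℝ × ℝ × ℝ) := Icc (-δ) δ ×ˢ Icc (-δ) δ ×ˢ Icc (-δ) δ with hSdef
  set Ef : ℝ × ℝ × ℝ → ℝ := fun p => E p.1 p.2.1 p.2.2 with hEfdef
  have hδδ : (-δ : ℝ) < δ := by linarith
  have hI : UniqueDiffOn ℝ (Icc (-δ : ℝ) δ) := uniqueDiffOn_Icc hδδ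
  have hu : UniqueDiffOn ℝ S := hI.prod (hI.prod hI)
  have h0 : (0 : ℝ) ∈ Icc (-δ) δ := ⟨by linarith, by linarith⟩
  set F : ℝ × ℝ × ℝ → ℝ := fun q => fderivWithin ℝ Ef S q ((0 : ℝ), (0 : ℝ), (1 : ℝ))
    with hFdef
  have hE1 : DifferentiableOn ℝ Ef S := hE.differentiableOn (by norm_num)
  have hF1 : ContDiffOn ℝ 1 (fderivWithin ℝ Ef S) S := hE.fderivWithin hu (by norm_num)
  have hF2 : ContDiffOn ℝ 1 F S :=
    (ContinuousLinearMap.apply ℝ ℝ ((0 : ℝ), (0 : ℝ), (1 : ℝ))).contDiff.comp_contDiffOn hF1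
  have hFd : DifferentiableOn ℝ F S := hF2.differentiableOn one_ne_zero
  have hFc : ContinuousOn F S := hF2.continuousOn
  -- identification of the τ-slice derivative
  have key : ∀ a ∈ Icc (-δ) δ, ∀ b ∈ Icc (-δ) δ, ∀ t ∈ Ioo (-δ) δ,
      HasDerivAt (fun τ' => E a b τ') (F (a, b, t)) t := by
    intro a ha b hb t ht
    have hp : (a, b, t) ∈ S := ⟨ha, hb, Ioo_subset_Icc_self ht⟩
    have hfd : HasFDerivWithinAt Ef (fderivWithin ℝ Ef S (a, b, t)) S (a, b, t) :=
      (hE1 _ hp).hasFDerivWithinAt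
    have hγ : HasDerivWithinAt (fun t' : ℝ => ((a : ℝ), (b : ℝ), t'))
        ((0 : ℝ), (0 : ℝ), (1 : ℝ)) (Icc (-δ) δ) t :=
      (((hasDerivAt_const t a).prodMk ((hasDerivAt_const t b).prodMk
        (hasDerivAt_id t)))).hasDerivWithinAt
    have hmaps : MapsTo (fun t' : ℝ => ((a : ℝ), (b : ℝ), t')) (Icc (-δ) δ) S :=
      fun t' ht' => ⟨ha, hb, ht'⟩
    have hcomp := hfd.comp_hasDerivWithinAt t hγ hmaps
    exact (hcomp.hasDerivAt (Icc_mem_nhds ht.1 ht.2))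
  have keyd : ∀ a ∈ Icc (-δ) δ, ∀ b ∈ Icc (-δ) δ, ∀ t ∈ Ioo (-δ) δ,
      deriv (fun τ' => E a b τ') t = F (a, b, t) := fun a ha b hb t ht =>
    (key a ha b hb t ht).deriv
  -- differentiability / continuity of F along σ- and d-lines
  have hdiffσ : ∀ b ∈ Icc (-δ) δ, ∀ t ∈ Icc (-δ) δ, ∀ a ∈ Ioo (-δ) δ,
      DifferentiableAt ℝ (fun a' => F (a', b, t)) a := by
    intro b hb t ht a ha
    have hp : (a, b, t) ∈ S := ⟨Ioo_subset_Icc_self ha, hb, ht⟩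
    have hline : DifferentiableWithinAt ℝ (fun a' : ℝ => ((a' : ℝ), (b : ℝ), (t : ℝ)))
        (Icc (-δ) δ) a :=
      (differentiableWithinAt_id.prodMk (differentiableWithinAt_const (b, t)))
    have hmaps : MapsTo (fun a' : ℝ => ((a' : ℝ), (b : ℝ), (t : ℝ))) (Icc (-δ) δ) S :=
      fun a' ha' => ⟨ha', hb, ht⟩
    have := (hFd _ hp).comp a hline hmaps
    exact this.differentiableAt (Icc_mem_nhds ha.1 ha.2)
  have hdiffd : ∀ a ∈ Icc (-δ) δ, ∀ t ∈ Icc (-δ) δ, ∀ b ∈ Ioo (-δ) δ,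
      DifferentiableAt ℝ (fun b' => F (a, b', t)) b := by
    intro a ha t ht b hb
    have hp : (a, b, t) ∈ S := ⟨ha, Ioo_subset_Icc_self hb, ht⟩
    have hline : DifferentiableWithinAt ℝ (fun b' : ℝ => ((a : ℝ), (b' : ℝ), (t : ℝ)))
        (Icc (-δ) δ) b :=
      (differentiableWithinAt_const a).prodMk
        (differentiableWithinAt_id.prodMk (differentiableWithinAt_const t))
    have hmaps : MapsTo (fun b' : ℝ => ((a : ℝ), (b' : ℝ), (t : ℝ))) (Icc (-δ) δ) S :=
      fun b' hb' => ⟨ha, hb', ht⟩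
    have := (hFd _ hp).comp b hline hmaps
    exact this.differentiableAt (Icc_mem_nhds hb.1 hb.2)
  have hcontσ : ∀ b ∈ Icc (-δ) δ, ∀ t ∈ Icc (-δ) δ,
      ContinuousOn (fun a' => F (a', b, t)) (Icc (-δ) δ) := by
    intro b hb t ht
    exact hFc.comp ((continuous_id.prodMk continuous_const).continuousOn)
      (fun a' ha' => ⟨ha', hb, ht⟩)
  have hcontd : ∀ a ∈ Icc (-δ) δ, ∀ t ∈ Icc (-δ) δ,
      ContinuousOn (fun b' => F (a, b', t)) (Icc (-δ) δ) := by
    intro a ha t ht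
    exact hFc.comp ((continuous_const.prodMk
      (continuous_id.prodMk continuous_const)).continuousOn)
      (fun b' hb' => ⟨ha, hb', ht⟩)
  -- bound on the τ-derivative at interior τ
  have hbound : ∀ t ∈ Ioo (-δ) δ, |F (σ, d, t)| ≤ M * (|σ| + |d|) := by
    intro t ht
    have htI : t ∈ Icc (-δ) δ := Ioo_subset_Icc_self ht
    -- eq between F-lines and deriv-lines near interior points
    have eqσ : ∀ a ∈ Ioo (-δ) δ,
        deriv (fun a' => F (a', d, t)) a
          = deriv (fun a' => deriv (fun τ' => E a' d τ') t) a := by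
      intro a ha
      apply Filter.EventuallyEq.deriv_eq
      filter_upwards [Icc_mem_nhds ha.1 ha.2] with a' ha'
      exact (keyd a' ha' d hd t ht).symm
    have eqd : ∀ b ∈ Ioo (-δ) δ,
        deriv (fun b' => F (0, b', t)) b
          = deriv (fun b' => deriv (fun τ' => E 0 b' τ') t) b := by
      intro b hb
      apply Filter.EventuallyEq.deriv_eq
      filter_upwards [Icc_mem_nhds hb.1 hb.2] with b' hb'
      exact (keyd 0 h0 b' hb' t ht).symm
    have hsubσI : Icc (min 0 σ) (max 0 σ) ⊆ Icc (-δ) δ :=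
      Icc_subset_Icc (le_min h0.1 hσ.1) (max_le h0.2 hσ.2)
    have hsubσO : Ioo (min 0 σ) (max 0 σ) ⊆ Ioo (-δ) δ :=
      Ioo_subset_Ioo (le_min h0.1 hσ.1) (max_le h0.2 hσ.2)
    have hsubdI : Icc (min 0 d) (max 0 d) ⊆ Icc (-δ) δ :=
      Icc_subset_Icc (le_min h0.1 hd.1) (max_le h0.2 hd.2)
    have hsubdO : Ioo (min 0 d) (max 0 d) ⊆ Ioo (-δ) δ :=
      Ioo_subset_Ioo (le_min h0.1 hd.1) (max_le h0.2 hd.2)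
    have step1 : |F (σ, d, t) - F (0, d, t)| ≤ M * |σ| := by
      apply mvt_abs_aux (f := fun a' => F (a', d, t)) (x := σ) (C := M)
      · exact (hcontσ d hd t htI).mono hsubσI
      · intro a ha
        exact ((hdiffσ d hd t htI a (hsubσO ha))).hasDerivAt
      · intro a ha
        rw [eqσ a (hsubσO ha)]
        exact hmix₁ a (Ioo_subset_Icc_self (hsubσO ha)) d hd t htI
    have step2 : |F (0, d, t) - F (0, 0, t)| ≤ M * |d| := by
      apply mvt_abs_aux (f := fun b' => F (0, b', t)) (x := d) (C := M)
      · exact (hcontd 0 h0 t htI).mono hsubdI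
      · intro b hb
        exact ((hdiffd 0 h0 t htI b (hsubdO hb))).hasDerivAt
      · intro b hb
        rw [eqd b (hsubdO hb)]
        exact hmix₂ 0 h0 b (Ioo_subset_Icc_self (hsubdO hb)) t htI
    have step3 : F (0, 0, t) = 0 := by
      rw [← keyd 0 h0 0 h0 t ht]
      exact hzero' t htI
    calc |F (σ, d, t)|
        = |(F (σ, d, t) - F (0, d, t)) + (F (0, d, t) - F (0, 0, t)) + F (0, 0, t)| := by
          ring_nf
      _ ≤ |F (σ, d, t) - F (0, d, t)| + |F (0, d, t) - F (0, 0, t)| + |F (0, 0, t)| := by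
          exact (abs_add_le _ _).trans (by gcongr; exact abs_add_le _ _)
      _ ≤ M * |σ| + M * |d| + 0 := by
          rw [step3, sub_zero] at step2
          rw [step3, sub_zero, abs_zero]
          exact add_le_add (add_le_add step1 step2) le_rfl
      _ = M * (|σ| + |d|) := by ring
  -- now apply the MVT in τ
  have hsubτI : Icc (min 0 τ) (max 0 τ) ⊆ Icc (-δ) δ :=
    Icc_subset_Icc (le_min h0.1 hτ.1) (max_le h0.2 hτ.2)
  have hsubτO : Ioo (min 0 τ) (max 0 τ) ⊆ Ioo (-δ) δ :=
    Ioo_subset_Ioo (le_min h0.1 hτ.1) (max_le h0.2 hτ.2)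
  have hconth : ContinuousOn (fun τ' => E σ d τ') (Icc (-δ) δ) :=
    hE.continuousOn.comp ((continuous_const.prodMk
      (continuous_const.prodMk continuous_id)).continuousOn)
      (fun t' ht' => ⟨hσ, hd, ht'⟩)
  have hmain : |E σ d τ - E σ d 0| ≤ M * (|σ| + |d|) * |τ| := by
    apply mvt_abs_aux (f := fun τ' => E σ d τ') (x := τ) (C := M * (|σ| + |d|))
    · exact hconth.mono hsubτI
    · intro t ht
      exact (key σ hσ d hd t (hsubτO ht)).differentiableAt.hasDerivAt
    · intro t ht
      rw [keyd σ hσ d hd t (hsubτO ht)]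
      exact hbound t (hsubτO ht)
  rw [hzero σ hσ d hd, sub_zero] at hmain
  have habs : (0 : ℝ) ≤ M * (|σ| + |d|) * |τ| := by positivity
  nlinarith [abs_nonneg σ, abs_nonneg d, abs_nonneg τ,
    mul_nonneg hM (abs_nonneg τ), mul_nonneg (mul_nonneg hM (abs_nonneg τ))
      (add_nonneg (abs_nonneg σ) (abs_nonneg d))]

end
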